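/- (Distance of AEL codes) Let $G=(L,R,E)$ be an $(n,d,\lambda)$-expander, ${\mathcal C}_{\mathrm{out}} \subseteq \Sigma_{\mathrm{out}}^L$ an outer code of distance $\delta_{\mathrm{out}}$, and ${\mathcal C}_{\mathrm{in}} \subseteq \Sigma_{\mathrm{in}}^d$ an inner code of distance $\delta_{\mathrm{in}}$, with the AEL code ${\mathcal C}_{\mathrm{AEL}} \subseteq (\Sigma_{\mathrm{in}}^d)^R$ formed by encoding each outer symbol with ${\mathcal C}_{\mathrm{in}}$, writing symbols on edges, and folding at right vertices. Then for any two distinct codewords $h_1, h_2 \in {\mathcal C}_{\mathrm{AEL}}$, the fraction of right vertices where they differ satisfies $\Delta_R(h_1,h_2) \ge \delta_{\mathrm{in}} - \lambda/\delta_{\mathrm{out}}$. -/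

import Mathlib

open Finset

open scoped Classical

/-- Number of edges of the (sub)graph `P` between `S` and `T`. -/
noncomputable def eCount {L R : Type*} (P : L → R → Prop) (S : Finset L) (T : Finset R) : ℕ :=
  ((S ×ˢ T).filter fun p => P p.1 p.2).card

/-- Distance of AEL codes: let `G = (L,R,E)` be an `(n,d,λ)`-expander (a `d`-regular bipartite
graph, with a fixed ordering `ordL` of the edges at each left vertex, satisfying the expander
mixing lemma), `Cout` an outer code on `L` of distance `δout > 0`, and `Cin ⊆ Ain^d` an inner
code of distance `δin`, with encoding map `Enc : Aout → Cin`. If `h₁, h₂` are AEL codewords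
(edge labelings whose left local views are the `Enc`-encodings of outer codewords `f₁, f₂`)
that differ on some edge, then the fraction of right vertices where they differ is at least
`δin - λ/δout`. -/
theorem ael_distance {L R Aout Ain : Type*} [Fintype L] [Fintype R]
    (n d : ℕ) (hL : Fintype.card L = n) (hR : Fintype.card R = n)
    (hn : 0 < n) (hd : 0 < d)
    (G : L → R → Prop)
    (ordL : ∀ ℓ : L, Fin d ≃ {r : R // G ℓ r})
    (lam δin δout : ℝ) (hlam : 0 ≤ lam) (hδout : 0 < δout)
    (hEML : ∀ (S : Finset L) (T : Finset R),
      |(eCount G S T : ℝ) - ((d : ℝ) / n) * S.card * T.card| ≤ lam * d * n)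
    (Cin : Set (Fin d → Ain)) (Cout : Set (L → Aout))
    (Enc : Aout → (Fin d → Ain)) (hEncInj : Function.Injective Enc)
    (hEncMem : ∀ σ, Enc σ ∈ Cin)
    (hCinDist : ∀ c ∈ Cin, ∀ c' ∈ Cin, c ≠ c' →
      δin * d ≤ ((Finset.univ.filter fun k : Fin d => c k ≠ c' k).card : ℝ))
    (hCoutDist : ∀ f ∈ Cout, ∀ f' ∈ Cout, f ≠ f' →
      δout * n ≤ ((Finset.univ.filter fun ℓ : L => f ℓ ≠ f' ℓ).card : ℝ))
    (h₁ h₂ : L → R → Ain) (f₁ f₂ : L → Aout)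
    (hf₁ : f₁ ∈ Cout) (hf₂ : f₂ ∈ Cout)
    (henc₁ : ∀ (ℓ : L) (k : Fin d), h₁ ℓ (ordL ℓ k).1 = Enc (f₁ ℓ) k)
    (henc₂ : ∀ (ℓ : L) (k : Fin d), h₂ ℓ (ordL ℓ k).1 = Enc (f₂ ℓ) k)
    (hne : ∃ ℓ r, G ℓ r ∧ h₁ ℓ r ≠ h₂ ℓ r) :
    (δin - lam / δout) * n ≤
      ((Finset.univ.filter fun r : R => ∃ ℓ, G ℓ r ∧ h₁ ℓ r ≠ h₂ ℓ r).card : ℝ) := by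
  classical
  set S : Finset L := Finset.univ.filter fun ℓ : L => f₁ ℓ ≠ f₂ ℓ with hS
  set T : Finset R := Finset.univ.filter fun r : R => ∃ ℓ, G ℓ r ∧ h₁ ℓ r ≠ h₂ ℓ r with hT
  set D : L → Finset (Fin d) :=
    fun ℓ => Finset.univ.filter fun k => Enc (f₁ ℓ) k ≠ Enc (f₂ ℓ) k with hD
  -- f₁ ≠ f₂
  have hfne : f₁ ≠ f₂ := by
    obtain ⟨ℓ, r, hGr, hdiff⟩ := hne
    intro h; apply hdiff
    have hk : h₁ ℓ ((ordL ℓ) ((ordL ℓ).symm ⟨r, hGr⟩)).1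
        = h₂ ℓ ((ordL ℓ) ((ordL ℓ).symm ⟨r, hGr⟩)).1 := by
      rw [henc₁, henc₂, h]
    simpa using hk
  -- |S| ≥ δout n
  have hScard : δout * n ≤ (S.card : ℝ) := hCoutDist f₁ hf₁ f₂ hf₂ hfne
  -- D ℓ lower bound
  have hDcard : ∀ ℓ ∈ S, δin * d ≤ ((D ℓ).card : ℝ) := by
    intro ℓ hℓ
    have hne' : Enc (f₁ ℓ) ≠ Enc (f₂ ℓ) := fun h => (Finset.mem_filter.mp hℓ).2 (hEncInj h)
    exact hCinDist _ (hEncMem _) _ (hEncMem _) hne'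
  -- injection into edges
  have hinj : (S.sigma D).card ≤ eCount G S T := by
    apply Finset.card_le_card_of_injOn (fun p => (p.1, ((ordL p.1) p.2).1))
    · rintro ⟨ℓ, k⟩ hp
      rw [Finset.mem_coe, Finset.mem_sigma] at hp
      rw [Finset.mem_coe]
      obtain ⟨hℓS, hkD⟩ := hp
      have hkD' := (Finset.mem_filter.mp hkD).2
      refine Finset.mem_filter.mpr ⟨Finset.mem_product.mpr ⟨hℓS, ?_⟩, ((ordL ℓ) k).2⟩
      refine Finset.mem_filter.mpr ⟨Finset.mem_univ _, ⟨ℓ, ((ordL ℓ) k).2, ?_⟩⟩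
      rw [henc₁, henc₂]; exact hkD'
    · rintro ⟨ℓ, k⟩ _ ⟨ℓ', k'⟩ _ h
      simp only [Prod.mk.injEq] at h
      obtain ⟨h1, h2⟩ := h
      subst h1
      have : (ordL ℓ) k = (ordL ℓ) k' := Subtype.ext h2
      exact Sigma.ext rfl (heq_of_eq ((ordL ℓ).injective this))
  -- total count
  have hcount : δin * d * S.card ≤ (eCount G S T : ℝ) := by
    calc δin * d * S.card = ∑ _ℓ ∈ S, δin * d := by rw [Finset.sum_const, nsmul_eq_mul]; ring
    _ ≤ ∑ ℓ ∈ S, ((D ℓ).card : ℝ) := Finset.sum_le_sum hDcard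
    _ = ((S.sigma D).card : ℝ) := by rw [Finset.card_sigma]; push_cast; ring
    _ ≤ (eCount G S T : ℝ) := by exact_mod_cast hinj
  -- EML
  have hEML' := hEML S T
  have hupper : (eCount G S T : ℝ) ≤ ((d : ℝ) / n) * S.card * T.card + lam * d * n := by
    have := abs_le.mp hEML'
    linarith [this.1, this.2]
  -- arithmetic
  set s : ℝ := (S.card : ℝ)
  set t : ℝ := (T.card : ℝ)
  have hnpos : (0 : ℝ) < n := by exact_mod_cast hn
  have hdpos : (0 : ℝ) < d := by exact_mod_cast hd
  have hspos : 0 < s := lt_of_lt_of_le (by positivity) hScard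
  have htnonneg : 0 ≤ t := Nat.cast_nonneg _
  have key : δin * s * n ≤ s * t + lam * n * n := by
    have h1 : δin * d * s ≤ (d / n) * s * t + lam * d * n := le_trans hcount hupper
    have h2 : δin * d * s * n ≤ d * s * t + lam * d * n * n := by
      have := mul_le_mul_of_nonneg_right h1 (le_of_lt hnpos)
      calc δin * d * s * n ≤ ((d / n) * s * t + lam * d * n) * n := this
      _ = d * s * t + lam * d * n * n := by field_simp
    nlinarith [hdpos]
  -- conclude
  have : (δin - lam / δout) * n ≤ t := by
    rcases le_or_gt (δin * n) t with h | h
    · have : lam / δout * n ≥ 0 := by positivity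
      nlinarith
    · have h3 : δout * n * (δin * n - t) ≤ s * (δin * n - t) := by
        apply mul_le_mul_of_nonneg_right hScard (by linarith)
      have h4 : s * (δin * n - t) ≤ lam * n * n := by nlinarith
      have h5 : δout * (δin * n - t) ≤ lam * n := by
        have := le_trans h3 h4
        nlinarith
      have h6 : δin * n - t ≤ lam / δout * n := by
        rw [div_mul_eq_mul_div, le_div_iff₀ hδout]
        nlinarith
      nlinarith
  exact this
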